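/- For every natural number n ≥ 0, b_n({12, 12̄, 1̄2, 1̄2̄}) = 2^n, and for every n ≥ 2, b_n({12, 12̄, 1̄2, 2̄1̄}) = 1 + C(n+1, 2). -/

import Mathlib

/-- A signed permutation of length `n`: a permutation of `Fin n` (the absolute
values) together with a sign (bar) for each position. -/
abbrev SignedPerm (n : ℕ) := Equiv.Perm (Fin n) × (Fin n → Bool)

/-- `α` contains the signed pattern `τ`. -/
def SPContains {n k : ℕ} (α : SignedPerm n) (τ : SignedPerm k) : Prop :=
  ∃ f : Fin k → Fin n, StrictMono f ∧
    (∀ p q : Fin k, τ.1 p < τ.1 q ↔ α.1 (f p) < α.1 (f q)) ∧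
    ∀ j : Fin k, α.2 (f j) = τ.2 j

/-- `α` avoids every pattern in `T`. -/
def AvoidsAll {n k : ℕ} (T : Set (SignedPerm k)) (α : SignedPerm n) : Prop :=
  ∀ τ ∈ T, ¬ SPContains α τ

/-- `bn n T` is the number of signed permutations in `B_n` avoiding all patterns of `T`. -/
noncomputable def bn (n : ℕ) (T : Set (SignedPerm 2)) : ℕ :=
  Nat.card {α : SignedPerm n // AvoidsAll T α}

def p12   : SignedPerm 2 := (Equiv.refl (Fin 2), ![false, false])
def p21   : SignedPerm 2 := (Equiv.swap 0 1,     ![false, false])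
def p12b  : SignedPerm 2 := (Equiv.refl (Fin 2), ![false, true])
def p1b2  : SignedPerm 2 := (Equiv.refl (Fin 2), ![true, false])
def p21b  : SignedPerm 2 := (Equiv.swap 0 1,     ![false, true])
def p2b1  : SignedPerm 2 := (Equiv.swap 0 1,     ![true, false])
def p1b2b : SignedPerm 2 := (Equiv.refl (Fin 2), ![true, true])
def p2b1b : SignedPerm 2 := (Equiv.swap 0 1,     ![true, true])

set_option linter.deprecated false
set_option maxHeartbeats 1000000

-- ### generic helpers

lemma strictMono_fin_eq_id {n : ℕ} {f : Fin n → Fin n} (hf : StrictMono f) : f = id := by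
  have hb : Function.Bijective f := Finite.injective_iff_bijective.1 hf.injective
  exact (StrictMono.range_inj hf strictMono_id).mp (by rw [hb.2.range_eq, Set.range_id])

lemma perm_eq_of_lt_iff {n : ℕ} {π ρ : Equiv.Perm (Fin n)}
    (h : ∀ i j, π i < π j ↔ ρ i < ρ j) : π = ρ := by
  have hm : StrictMono (fun a => π (ρ.symm a)) := by
    intro a b hab
    exact (h _ _).mpr (by simpa using hab)
  have h2 := strictMono_fin_eq_id hm
  apply Equiv.ext; intro i
  simpa using congrFun h2 (ρ i)

lemma strictMono_pair {n : ℕ} {i j : Fin n} (h : i < j) : StrictMono ![i, j] := by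
  intro p q hpq
  fin_cases p <;> fin_cases q <;> simp_all

lemma spContains_refl_iff {n : ℕ} (α : SignedPerm n) (b : Fin 2 → Bool) :
    SPContains α (Equiv.refl (Fin 2), b) ↔
      ∃ i j : Fin n, i < j ∧ α.1 i < α.1 j ∧ α.2 i = b 0 ∧ α.2 j = b 1 := by
  constructor
  · rintro ⟨f, hf, hord, hsgn⟩
    exact ⟨f 0, f 1, hf (by decide), (hord 0 1).mp (by show (0:Fin 2) < 1; decide), hsgn 0, hsgn 1⟩
  · rintro ⟨i, j, hij, hlt, hbi, hbj⟩
    refine ⟨![i, j], strictMono_pair hij, ?_, ?_⟩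
    · intro p q
      fin_cases p <;> fin_cases q <;>
        simp [lt_irrefl, hlt, lt_asymm hlt]
    · intro p; fin_cases p <;> simpa
  
lemma spContains_swap_iff {n : ℕ} (α : SignedPerm n) (b : Fin 2 → Bool) :
    SPContains α (Equiv.swap 0 1, b) ↔
      ∃ i j : Fin n, i < j ∧ α.1 j < α.1 i ∧ α.2 i = b 0 ∧ α.2 j = b 1 := by
  constructor
  · rintro ⟨f, hf, hord, hsgn⟩
    exact ⟨f 0, f 1, hf (by decide), (hord 1 0).mp (by show Equiv.swap (0:Fin 2) 1 1 < Equiv.swap (0:Fin 2) 1 0; decide), hsgn 0, hsgn 1⟩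
  · rintro ⟨i, j, hij, hlt, hbi, hbj⟩
    refine ⟨![i, j], strictMono_pair hij, ?_, ?_⟩
    · intro p q
      fin_cases p <;> fin_cases q <;>
        simp [lt_irrefl, hlt, lt_asymm hlt, Equiv.swap_apply_left, Equiv.swap_apply_right]
    · intro p; fin_cases p <;> simpa

-- ### Part 1

lemma avoid1_iff {n : ℕ} (α : SignedPerm n) :
    AvoidsAll {p12, p12b, p1b2, p1b2b} α ↔ ∀ i j : Fin n, i < j → ¬ α.1 i < α.1 j := by
  constructor
  · intro h i j hij hlt
    have mem : (Equiv.refl (Fin 2), ![α.2 i, α.2 j]) ∈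
        ({p12, p12b, p1b2, p1b2b} : Set (SignedPerm 2)) := by
      cases hbi : α.2 i <;> cases hbj : α.2 j <;>
        simp [p12, p12b, p1b2, p1b2b, hbi, hbj]
    exact h _ mem ((spContains_refl_iff α _).mpr ⟨i, j, hij, hlt, by simp, by simp⟩)
  · intro h τ hτ
    have : ∃ b : Fin 2 → Bool, τ = (Equiv.refl (Fin 2), b) := by
      rcases hτ with h' | h' | h' | h' <;> exact ⟨_, h'⟩
    obtain ⟨b, rfl⟩ := this
    rw [spContains_refl_iff]
    rintro ⟨i, j, hij, hlt, -⟩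
    exact h i j hij hlt

lemma avoid1_iff' {n : ℕ} (α : SignedPerm n) :
    AvoidsAll {p12, p12b, p1b2, p1b2b} α ↔ α.1 = Fin.revPerm := by
  rw [avoid1_iff]
  constructor
  · intro h
    have hm : StrictMono (fun i => Fin.rev (α.1 i)) := by
      intro a b hab
      rw [Fin.rev_lt_rev]
      rcases lt_trichotomy (α.1 b) (α.1 a) with h' | h' | h'
      · exact h'
      · exact absurd (α.1.injective h') (ne_of_gt hab)
      · exact absurd h' (h a b hab)
    have h2 := strictMono_fin_eq_id hm
    apply Equiv.ext; intro i
    have := congrFun h2 i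
    simp only [id_eq] at this
    exact Fin.rev_eq_iff.mp this
  · rintro h i j hij
    rw [h]
    simp only [Fin.revPerm_apply]
    rw [Fin.rev_lt_rev]
    exact fun h' => absurd hij (lt_asymm h')

lemma part1 (n : ℕ) : bn n {p12, p12b, p1b2, p1b2b} = 2 ^ n := by
  have e : {α : SignedPerm n // AvoidsAll {p12, p12b, p1b2, p1b2b} α} ≃ (Fin n → Bool) :=
    { toFun := fun a => a.1.2
      invFun := fun b => ⟨(Fin.revPerm, b), (avoid1_iff' _).mpr rfl⟩
      left_inv := fun a => Subtype.ext (Prod.ext ((avoid1_iff' _).mp a.2).symm rfl)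
      right_inv := fun b => rfl }
  rw [bn, Nat.card_congr e]
  simp [Nat.card_eq_fintype_card]

-- ### Part 2: the block family

def blkFun (n s t : ℕ) (i : Fin n) : Fin n :=
  if h : s ≤ i.val ∧ i.val < t ∧ t ≤ n then
    ⟨n - t + (i.val - s), by obtain ⟨h1, h2, h3⟩ := h; omega⟩
  else i.rev

lemma blkFun_val (n s t : ℕ) (i : Fin n) :
    (blkFun n s t i).val =
      if s ≤ i.val ∧ i.val < t ∧ t ≤ n then n - t + (i.val - s) else n - 1 - i.val := by
  rw [blkFun]
  split_ifs with h
  · rfl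
  · rw [Fin.val_rev]; omega

lemma blkFun_inj (n s t : ℕ) : Function.Injective (blkFun n s t) := by
  intro i j hij
  have hv : (blkFun n s t i).val = (blkFun n s t j).val := congrArg Fin.val hij
  rw [blkFun_val, blkFun_val] at hv
  have hi := i.isLt
  have hj := j.isLt
  apply Fin.ext
  split_ifs at hv <;> omega

noncomputable def blkPerm (n s t : ℕ) : Equiv.Perm (Fin n) :=
  Equiv.ofBijective _ (Finite.injective_iff_bijective.1 (blkFun_inj n s t))

lemma blkPerm_apply (n s t : ℕ) (i : Fin n) : blkPerm n s t i = blkFun n s t i := rfl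

lemma blk_lt_iff {n s t : ℕ} (hst : s ≤ t) (htn : t ≤ n) {i j : Fin n} (hij : i.val < j.val) :
    blkFun n s t i < blkFun n s t j ↔
      ((s ≤ i.val ∧ i.val < t) ∧ (s ≤ j.val ∧ j.val < t)) := by
  rw [Fin.lt_def, blkFun_val, blkFun_val]
  have hi := i.isLt
  have hj := j.isLt
  split_ifs <;> omega

noncomputable def Fst (n s t : ℕ) : SignedPerm n :=
  (blkPerm n s t, fun i => decide (s ≤ i.val ∧ i.val < t))

-- pairwise criterion for avoiding the second family
lemma avoid2_iff {n : ℕ} (α : SignedPerm n) :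
    AvoidsAll {p12, p12b, p1b2, p2b1b} α ↔
      ((∀ i j : Fin n, i < j → α.1 i < α.1 j → α.2 i = true ∧ α.2 j = true) ∧
       (∀ i j : Fin n, i < j → α.1 j < α.1 i → ¬(α.2 i = true ∧ α.2 j = true))) := by
  constructor
  · intro h
    constructor
    · intro i j hij hlt
      by_contra hc
      have mem : (Equiv.refl (Fin 2), ![α.2 i, α.2 j]) ∈
          ({p12, p12b, p1b2, p2b1b} : Set (SignedPerm 2)) := by
        cases hbi : α.2 i <;> cases hbj : α.2 j <;>
          simp_all [p12, p12b, p1b2, p2b1b]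
      exact h _ mem ((spContains_refl_iff α _).mpr ⟨i, j, hij, hlt, by simp, by simp⟩)
    · rintro i j hij hlt ⟨hbi, hbj⟩
      have mem : p2b1b ∈ ({p12, p12b, p1b2, p2b1b} : Set (SignedPerm 2)) := by simp
      exact h _ mem ((spContains_swap_iff α _).mpr
        ⟨i, j, hij, hlt, by simp [p2b1b, hbi], by simp [p2b1b, hbj]⟩)
  · rintro ⟨h1, h2⟩ τ hτ
    have : τ = (Equiv.refl (Fin 2), ![false, false]) ∨ τ = (Equiv.refl (Fin 2), ![false, true]) ∨
        τ = (Equiv.refl (Fin 2), ![true, false]) ∨ τ = (Equiv.swap 0 1, ![true, true]) := by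
      rcases hτ with h' | h' | h' | h' <;> simp_all [p12, p12b, p1b2, p2b1b]
    rcases this with rfl | rfl | rfl | rfl
    · rw [spContains_refl_iff]
      rintro ⟨i, j, hij, hlt, hbi, hbj⟩
      have := h1 i j hij hlt
      simp_all
    · rw [spContains_refl_iff]
      rintro ⟨i, j, hij, hlt, hbi, hbj⟩
      have := h1 i j hij hlt
      simp_all
    · rw [spContains_refl_iff]
      rintro ⟨i, j, hij, hlt, hbi, hbj⟩
      have := h1 i j hij hlt
      simp_all
    · rw [spContains_swap_iff]
      rintro ⟨i, j, hij, hlt, hbi, hbj⟩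
      exact h2 i j hij hlt ⟨by simpa using hbi, by simpa using hbj⟩

lemma Fst_avoids {n s t : ℕ} (hst : s ≤ t) (htn : t ≤ n) :
    AvoidsAll {p12, p12b, p1b2, p2b1b} (Fst n s t) := by
  rw [avoid2_iff]
  constructor
  · intro i j hij hlt
    have hij' : i.val < j.val := hij
    have h := (blk_lt_iff hst htn hij').mp hlt
    simp only [Fst, decide_eq_true_eq]
    exact h
  · rintro i j hij hlt ⟨hbi, hbj⟩
    have hij' : i.val < j.val := hij
    simp only [Fst, decide_eq_true_eq] at hbi hbj
    have hji : ¬ (blkFun n s t j < blkFun n s t i) := by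
      rw [Fin.lt_def, blkFun_val, blkFun_val]
      have hi := i.isLt
      have hj := j.isLt
      split_ifs <;> omega
    exact hji hlt

-- if α avoids, then α = Fst n s t for suitable s t
lemma avoid2_exists {n : ℕ} (α : SignedPerm n) (h : AvoidsAll {p12, p12b, p1b2, p2b1b} α) :
    ∃ s t : ℕ, s ≤ t ∧ t ≤ n ∧ (s = t → s = 0) ∧ α = Fst n s t := by
  obtain ⟨C1, C2⟩ := (avoid2_iff α).mp h
  have key : ∀ i j : Fin n, i < j → (α.1 i < α.1 j ↔ (α.2 i = true ∧ α.2 j = true)) := by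
    intro i j hij
    refine ⟨C1 i j hij, ?_⟩
    rintro ⟨hbi, hbj⟩
    rcases lt_trichotomy (α.1 i) (α.1 j) with h' | h' | h'
    · exact h'
    · exact absurd (α.1.injective h') (ne_of_lt hij)
    · exact absurd ⟨hbi, hbj⟩ (C2 i j hij h')
  -- main step: given the sign set is the interval [s,t), the permutation is blkPerm
  have main : ∀ s t : ℕ, s ≤ t → t ≤ n →
      (∀ i : Fin n, α.2 i = true ↔ (s ≤ i.val ∧ i.val < t)) → α = Fst n s t := by
    intro s t hst htn hB
    have hperm : α.1 = blkPerm n s t := by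
      apply perm_eq_of_lt_iff
      intro i j
      rcases lt_trichotomy i j with hij | rfl | hji
      · rw [key i j hij, blkPerm_apply, blkPerm_apply, blk_lt_iff hst htn hij, hB, hB]
      · simp
      · have e1 : (α.1 i < α.1 j) ↔ ¬ (α.1 j < α.1 i) := by
          constructor
          · exact fun h' => lt_asymm h'
          · intro h'
            exact (not_lt.mp h').lt_of_ne fun e => absurd (α.1.injective e) (ne_of_gt hji)
        have e2 : (blkPerm n s t i < blkPerm n s t j) ↔ ¬ (blkPerm n s t j < blkPerm n s t i) := by
          constructor
          · exact fun h' => lt_asymm h'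
          · intro h'
            refine (not_lt.mp h').lt_of_ne fun e => ?_
            exact absurd (blkFun_inj n s t e) (ne_of_gt hji)
        rw [e1, e2, key j i hji, blkPerm_apply, blkPerm_apply, blk_lt_iff hst htn hji, hB, hB]
    have hsgn : α.2 = fun i => decide (s ≤ i.val ∧ i.val < t) := by
      funext i
      have hBi := hB i
      cases h' : α.2 i
      · rw [h'] at hBi
        simp only [Bool.false_eq_true, false_iff] at hBi
        exact (decide_eq_false hBi).symm
      · rw [h'] at hBi
        simp only [true_iff] at hBi
        exact (decide_eq_true hBi).symm
    exact Prod.ext hperm hsgn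
  by_cases hall : ∀ i : Fin n, α.2 i = false
  · refine ⟨0, 0, le_refl 0, Nat.zero_le n, fun _ => rfl, main 0 0 le_rfl (Nat.zero_le n) ?_⟩
    intro i
    simp [hall i]
  · push_neg at hall
    obtain ⟨i0, hi0⟩ := hall
    have hi0' : α.2 i0 = true := by revert hi0; cases α.2 i0 <;> simp
    set S : Finset (Fin n) := Finset.univ.filter (fun i => α.2 i = true) with hS
    have hne : S.Nonempty := ⟨i0, by simp [hS, hi0']⟩
    set p := S.min' hne with hp
    set q := S.max' hne with hq
    have hpmem : α.2 p = true := by have := S.min'_mem hne; simpa [hS] using this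
    have hqmem : α.2 q = true := by have := S.max'_mem hne; simpa [hS] using this
    have hpq' : p.val ≤ q.val := S.min'_le _ (S.max'_mem hne)
    have hqn : q.val < n := q.isLt
    refine ⟨p.val, q.val + 1, by omega, by omega, by omega, main _ _ (by omega) (by omega) ?_⟩
    intro i
    constructor
    · intro hbi
      have hmem : i ∈ S := by simp [hS, hbi]
      have h1 := S.min'_le _ hmem
      have h2 := S.le_max' _ hmem
      exact ⟨h1, by omega⟩
    · rintro ⟨h1, h2⟩
      by_contra hbi
      have hbi' : α.2 i = false := by revert hbi; cases α.2 i <;> simp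
      have hip : p < i := by
        rcases lt_or_eq_of_le (show p.val ≤ i.val from h1) with h' | h'
        · exact h'
        · exact absurd (congrArg (α.2) (Fin.ext h'.symm)) (by simp [hbi', hpmem])
      have hiq : i < q := by
        have h2' : i.val ≤ q.val := by omega
        rcases lt_or_eq_of_le h2' with h' | h'
        · exact h'
        · exact absurd (congrArg (α.2) (Fin.ext h')) (by simp [hbi', hqmem])
      have hpi : ¬ α.1 p < α.1 i := fun h' => by
        have := (key p i hip).mp h'
        simp [hbi'] at this
      have hiq' : ¬ α.1 i < α.1 q := fun h' => by
        have := (key i q hiq).mp h'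
        simp [hbi'] at this
      have hpq : α.1 p < α.1 q := (key p q (lt_trans hip hiq)).mpr ⟨hpmem, hqmem⟩
      have h3 : α.1 i < α.1 p := by
        refine (not_lt.mp hpi).lt_of_ne fun e => ?_
        exact absurd (α.1.injective e) (ne_of_gt hip)
      have h4 : α.1 q < α.1 i := by
        refine (not_lt.mp hiq').lt_of_ne fun e => ?_
        exact absurd (α.1.injective e) (ne_of_gt hiq)
      exact absurd hpq (lt_asymm (lt_trans h4 h3))

lemma Fst_inj {n s t s' t' : ℕ} (hst : s ≤ t) (htn : t ≤ n) (hnorm : s = t → s = 0)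
    (hst' : s' ≤ t') (htn' : t' ≤ n) (hnorm' : s' = t' → s' = 0)
    (h : Fst n s t = Fst n s' t') : s = s' ∧ t = t' := by
  have hsgn : ∀ i : Fin n, ((s ≤ i.val ∧ i.val < t) ↔ (s' ≤ i.val ∧ i.val < t')) := by
    intro i
    have h0 : (decide (s ≤ i.val ∧ i.val < t)) = (decide (s' ≤ i.val ∧ i.val < t')) :=
      congrFun (congrArg Prod.snd h) i
    exact decide_eq_decide.mp h0
  by_cases hlt : s < t
  · have hs : s < n := by omega
    have h1 : s' ≤ s ∧ s < t' := (hsgn ⟨s, hs⟩).mp ⟨le_refl s, hlt⟩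
    have ht1 : t - 1 < n := by omega
    have h2 : s' ≤ t - 1 ∧ t - 1 < t' := (hsgn ⟨t - 1, ht1⟩).mp ⟨by show s ≤ t - 1; omega, by show t - 1 < t; omega⟩
    by_cases hlt' : s' < t'
    · have hs' : s' < n := by omega
      have h3 : s ≤ s' ∧ s' < t := (hsgn ⟨s', hs'⟩).mpr ⟨le_refl s', hlt'⟩
      have ht1' : t' - 1 < n := by omega
      have h4 : s ≤ t' - 1 ∧ t' - 1 < t := (hsgn ⟨t' - 1, ht1'⟩).mpr ⟨by show s' ≤ t' - 1; omega, by show t' - 1 < t'; omega⟩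
      omega
    · omega
  · have hs0 : s = 0 ∧ t = 0 := by have := hnorm; omega
    by_cases hlt' : s' < t'
    · have hs' : s' < n := by omega
      have h3 : s ≤ s' ∧ s' < t := (hsgn ⟨s', hs'⟩).mpr ⟨le_refl s', hlt'⟩
      omega
    · have := hnorm'
      omega

/-- index type for the second family -/
def Idx (n : ℕ) := {p : ℕ × ℕ // p.1 ≤ p.2 ∧ p.2 ≤ n ∧ (p.1 = p.2 → p.1 = 0)}

def idxEquiv (n : ℕ) : Idx n ≃ (Unit ⊕ Σ t : Fin (n + 1), Fin t.val) where
  toFun p := if h : p.1.1 < p.1.2 then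
      Sum.inr ⟨⟨p.1.2, by have := p.2.2.1; omega⟩, ⟨p.1.1, h⟩⟩ else Sum.inl ()
  invFun x := x.elim (fun _ => ⟨(0, 0), by omega⟩)
    (fun y => ⟨(y.2.val, y.1.val), by
      have h1 := y.2.isLt
      have h2 := y.1.isLt
      omega⟩)
  left_inv := by
    rintro ⟨⟨s, t⟩, hp⟩
    by_cases h : s < t
    · simp [dif_pos h]
      rfl
    · have : s = 0 ∧ t = 0 := by
        obtain ⟨h1, h2, h3⟩ := hp
        omega
      simp only [dif_neg h]
      exact Subtype.ext (by simp [this.1, this.2]; rfl)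
  right_inv := by
    rintro (⟨⟩ | ⟨t, s⟩)
    · simp
      exact le_refl 0
    · have h : (s.val : ℕ) < t.val := s.isLt
      simp only [Sum.elim_inr, dif_pos h]
      exact dif_pos h

lemma card_idx (n : ℕ) : Nat.card (Idx n) = 1 + Nat.choose (n + 1) 2 := by
  rw [Nat.card_congr (idxEquiv n)]
  rw [Nat.card_eq_fintype_card]
  rw [Fintype.card_sum, Fintype.card_sigma]
  simp only [Fintype.card_fin, Fintype.card_unit]
  rw [Fin.sum_univ_eq_sum_range (fun i => i)]
  rw [Finset.sum_range_id]
  rw [Nat.choose_two_right]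

lemma part2 (n : ℕ) : bn n {p12, p12b, p1b2, p2b1b} = 1 + Nat.choose (n + 1) 2 := by
  rw [bn, ← card_idx n]
  apply Nat.card_congr
  apply Equiv.symm
  refine Equiv.ofBijective
    (fun p : Idx n => ⟨Fst n p.1.1 p.1.2, Fst_avoids p.2.1 p.2.2.1⟩) ⟨?_, ?_⟩
  · rintro ⟨⟨s, t⟩, h1, h2, h3⟩ ⟨⟨s', t'⟩, h1', h2', h3'⟩ he
    have := Fst_inj h1 h2 h3 h1' h2' h3' (congrArg Subtype.val he)
    exact Subtype.ext (Prod.ext this.1 this.2)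
  · rintro ⟨α, hα⟩
    obtain ⟨s, t, hst, htn, hnorm, heq⟩ := avoid2_exists α hα
    exact ⟨⟨(s, t), hst, htn, hnorm⟩, Subtype.ext heq.symm⟩


/-- b_n({12,12̄,1̄2,1̄2̄}) = 2^n for n ≥ 0, and b_n({12,12̄,1̄2,2̄1̄}) = 1 + C(n+1,2) for n ≥ 2. -/
theorem stmt14 (n : ℕ) :
    bn n {p12, p12b, p1b2, p1b2b} = 2 ^ n ∧
    (2 ≤ n → bn n {p12, p12b, p1b2, p2b1b} = 1 + Nat.choose (n + 1) 2) := by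
  exact ⟨part1 n, fun _ => part2 n⟩
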